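/- Let ψ(x) := Γ′(x)/Γ(x) be the digamma function and γ the Euler–Mascheroni constant. Then Σ_{n=1}^∞ ( 2ψ(4n) + ψ(n) + 3/(4n) − log(16 n³) ) < (log(32π³) − 3γ)/4, and Σ_{n=1}^∞ ( 2ψ(n) + ψ(n/4) + 3/n − log(n³/4) ) < log(π³/2) − 3γ. -/

import Mathlib

open Real

noncomputable def digammaFn (x : ℝ) : ℝ := deriv Real.Gamma x / Real.Gamma x

section aux

open Filter Set

private lemma gammaDiff {x : ℝ} (hx : 0 < x) : DifferentiableAt ℝ Real.Gamma x :=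
  Real.differentiableAt_Gamma fun m =>
    ((neg_nonpos.mpr (Nat.cast_nonneg m)).trans_lt hx).ne'

private lemma logGammaDiff {x : ℝ} (hx : 0 < x) :
    DifferentiableAt ℝ (fun y => Real.log (Real.Gamma y)) x :=
  (gammaDiff hx).log (Real.Gamma_pos_of_pos hx).ne'

private lemma digamma_eq {x : ℝ} (hx : 0 < x) :
    digammaFn x = deriv (fun y => Real.log (Real.Gamma y)) x := by
  rw [deriv.log (gammaDiff hx) (Real.Gamma_pos_of_pos hx).ne']
  rfl

private lemma logGamma_rec {x : ℝ} (hx : 0 < x) :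
    deriv (fun y => Real.log (Real.Gamma y)) (x + 1)
      = deriv (fun y => Real.log (Real.Gamma y)) x + 1 / x := by
  rw [← deriv_comp_add_const, one_div, ← Real.deriv_log,
    ← deriv_fun_add (logGammaDiff hx) (Real.differentiableAt_log hx.ne')]
  apply Filter.EventuallyEq.deriv_eq
  filter_upwards [eventually_gt_nhds hx] with y hy
  rw [Real.Gamma_add_one hy.ne',
    Real.log_mul hy.ne' (Real.Gamma_pos_of_pos hy).ne']
  ring

private lemma logGamma_sum {x : ℝ} (hx : 0 < x) (k : ℕ) :
    deriv (fun y => Real.log (Real.Gamma y)) (x + k)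
      = deriv (fun y => Real.log (Real.Gamma y)) x
        + ∑ j ∈ Finset.range k, 1 / (x + j) := by
  induction k with
  | zero => simp
  | succ k ih =>
      have hxk : 0 < x + k := by positivity
      have h1 : (x : ℝ) + (k + 1 : ℕ) = (x + k) + 1 := by push_cast; ring
      rw [h1, logGamma_rec hxk, ih, Finset.sum_range_succ]
      ring

private lemma digamma_le_log {x : ℝ} (hx : 0 < x) :
    deriv (fun y => Real.log (Real.Gamma y)) x ≤ Real.log x := by
  have hc := Real.convexOn_log_Gamma
  have h := hc.deriv_le_slope (mem_Ioi.mpr hx) (mem_Ioi.mpr (by linarith : (0:ℝ) < x + 1))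
    (by linarith) (logGammaDiff hx)
  rw [slope_def_field, show x + 1 - x = (1:ℝ) by ring, div_one] at h
  simp only [Function.comp_apply] at h
  rwa [Real.Gamma_add_one hx.ne',
    Real.log_mul hx.ne' (Real.Gamma_pos_of_pos hx).ne', add_sub_cancel_right] at h

private lemma log_step {a : ℝ} (ha : 0 < a) :
    Real.log (a + 1) - Real.log a ≤ 1 / (2 * a) + 1 / (2 * (a + 1)) := by
  have ha1 : (0:ℝ) < a + 1 := by linarith
  have hy : 1 ≤ (a + 1) / a := by rw [le_div_iff₀ ha]; linarith
  have h : Real.log ((a + 1) / a) ≤ ((a + 1) / a - ((a + 1) / a)⁻¹) / 2 := by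
    have := Real.self_le_sinh_iff.mpr (Real.log_nonneg hy)
    rwa [Real.sinh_log (by positivity)] at this
  rw [Real.log_div ha1.ne' ha.ne'] at h
  have he : ((a + 1) / a - ((a + 1) / a)⁻¹) / 2 = 1 / (2 * a) + 1 / (2 * (a + 1)) := by
    rw [inv_div]
    field_simp
    ring
  linarith [he ▸ h]

private lemma trapezoid {x : ℝ} (hx : 0 < x) (k : ℕ) :
    Real.log (x + k) - Real.log x + 1 / (2 * x) - 1 / (2 * (x + k))
      ≤ ∑ j ∈ Finset.range k, 1 / (x + j) := by
  induction k with
  | zero => simp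
  | succ k ih =>
      have hxk : 0 < x + (k:ℝ) := by positivity
      have hstep := log_step hxk
      have h1 : (x : ℝ) + (k + 1 : ℕ) = (x + k) + 1 := by push_cast; ring
      rw [h1, Finset.sum_range_succ]
      set a : ℝ := x + (k:ℝ) with ha
      clear_value a
      have h2 : (1 : ℝ) / a = 1 / (2 * a) + 1 / (2 * a) := by
        ring
      linarith

private lemma digamma_le {x : ℝ} (hx : 0 < x) :
    digammaFn x ≤ Real.log x - 1 / (2 * x) := by
  rw [digamma_eq hx]
  have key : ∀ k : ℕ, deriv (fun y => Real.log (Real.Gamma y)) x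
      ≤ Real.log x - 1 / (2 * x) + 1 / (2 * (x + k)) := by
    intro k
    have hxk : 0 < x + k := by positivity
    have h1 := logGamma_sum hx k
    have h2 := digamma_le_log hxk
    have h3 := trapezoid hx k
    rw [h1] at h2
    linarith
  have htend : Filter.Tendsto (fun k : ℕ =>
      Real.log x - 1 / (2 * x) + 1 / (2 * (x + k))) Filter.atTop
      (nhds (Real.log x - 1 / (2 * x))) := by
    have h0 : Filter.Tendsto (fun k : ℕ => 1 / (2 * (x + (k : ℝ)))) Filter.atTop (nhds 0) := by
      have hA : Filter.Tendsto (fun k : ℕ => 2 * (x + (k : ℝ))) Filter.atTop Filter.atTop :=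
        (Filter.tendsto_atTop_add_const_left _ x
          tendsto_natCast_atTop_atTop).const_mul_atTop two_pos
      exact hA.inv_tendsto_atTop.congr fun k => by simp [Pi.inv_apply, one_div]
    simpa using (tendsto_const_nhds.add h0)
  exact ge_of_tendsto' htend key

end aux

theorem digamma_series_inequalities :
    (∑' n : ℕ+, (2 * digammaFn (4 * (n : ℝ)) + digammaFn (n : ℝ) + 3 / (4 * (n : ℝ)) -
        Real.log (16 * (n : ℝ) ^ 3)) <
      (Real.log (32 * π ^ 3) - 3 * Real.eulerMascheroniConstant) / 4) ∧
    (∑' n : ℕ+, (2 * digammaFn (n : ℝ) + digammaFn ((n : ℝ) / 4) + 3 / (n : ℝ) -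
        Real.log ((n : ℝ) ^ 3 / 4)) <
      Real.log (π ^ 3 / 2) - 3 * Real.eulerMascheroniConstant) := by
  have hgam : Real.eulerMascheroniConstant < 2 / 3 :=
    Real.eulerMascheroniConstant_lt_two_thirds
  have hexp2 : Real.exp 2 < 8 := by
    have h := Real.exp_one_lt_d9
    have h0 := Real.exp_pos 1
    have : Real.exp 2 = Real.exp 1 * Real.exp 1 := by
      rw [← Real.exp_add]; norm_num
    nlinarith
  have hpi : (3:ℝ) < π := Real.pi_gt_three
  constructor
  · -- first series
    have hterm : ∀ n : ℕ+, (2 * digammaFn (4 * (n : ℝ)) + digammaFn (n : ℝ) + 3 / (4 * (n : ℝ)) -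
        Real.log (16 * (n : ℝ) ^ 3)) ≤ 0 := by
      intro n
      have hx : (0:ℝ) < (n : ℝ) := by exact_mod_cast n.pos
      set x : ℝ := (n : ℝ)
      have h1 := digamma_le (by positivity : (0:ℝ) < 4 * x)
      have h2 := digamma_le hx
      have hlog : Real.log (16 * x ^ 3) = 2 * Real.log (4 * x) + Real.log x := by
        rw [show (16 * x ^ 3 : ℝ) = (4 * x) ^ 2 * x by ring,
          Real.log_mul (by positivity) hx.ne', Real.log_pow]
        push_cast; ring
      have e1 : 1 / (2 * (4 * x)) = 1 / (8 * x) := by ring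
      have e2 : 1 / (2 * x) = 4 * (1 / (8 * x)) := by ring
      have e3 : 3 / (4 * x) = 6 * (1 / (8 * x)) := by ring
      linarith [h1, h2, e1, e2, e3, hlog]
    have hsum : (∑' n : ℕ+, (2 * digammaFn (4 * (n : ℝ)) + digammaFn (n : ℝ) + 3 / (4 * (n : ℝ)) -
        Real.log (16 * (n : ℝ) ^ 3))) ≤ 0 := tsum_nonpos hterm
    have hrhs : (0:ℝ) < (Real.log (32 * π ^ 3) - 3 * Real.eulerMascheroniConstant) / 4 := by
      have hpi3 : (27:ℝ) < π ^ 3 := by nlinarith [hpi, sq_nonneg (π - 3), Real.pi_pos, mul_pos Real.pi_pos Real.pi_pos]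
      have h32 : Real.exp 2 < 32 * π ^ 3 := by linarith
      have hl : (2:ℝ) < Real.log (32 * π ^ 3) := by
        have := Real.log_lt_log (Real.exp_pos 2) h32
        rwa [Real.log_exp] at this
      linarith
    linarith
  · -- second series
    have hterm : ∀ n : ℕ+, (2 * digammaFn (n : ℝ) + digammaFn ((n : ℝ) / 4) + 3 / (n : ℝ) -
        Real.log ((n : ℝ) ^ 3 / 4)) ≤ 0 := by
      intro n
      have hx : (0:ℝ) < (n : ℝ) := by exact_mod_cast n.pos
      set x : ℝ := (n : ℝ)
      have h1 := digamma_le hx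
      have h2 := digamma_le (by positivity : (0:ℝ) < x / 4)
      have hlog : Real.log (x ^ 3 / 4) = 2 * Real.log x + Real.log (x / 4) := by
        rw [show (x ^ 3 / 4 : ℝ) = x ^ 2 * (x / 4) by ring,
          Real.log_mul (by positivity) (by positivity), Real.log_pow]
        push_cast; ring
      have e1 : 1 / (2 * (x / 4)) = 2 / x := by ring
      have e2 : 1 / (2 * x) = (1 / 2) * (1 / x) := by ring
      have e3 : 2 / x = 2 * (1 / x) := by ring
      have e4 : 3 / x = 3 * (1 / x) := by ring
      linarith [h1, h2, e1, e2, e3, e4, hlog]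
    have hsum : (∑' n : ℕ+, (2 * digammaFn (n : ℝ) + digammaFn ((n : ℝ) / 4) + 3 / (n : ℝ) -
        Real.log ((n : ℝ) ^ 3 / 4))) ≤ 0 := tsum_nonpos hterm
    have hrhs : (0:ℝ) < Real.log (π ^ 3 / 2) - 3 * Real.eulerMascheroniConstant := by
      have hpi3 : (27:ℝ) < π ^ 3 := by nlinarith [hpi, sq_nonneg (π - 3), Real.pi_pos, mul_pos Real.pi_pos Real.pi_pos]
      have h32 : Real.exp 2 < π ^ 3 / 2 := by linarith
      have hl : (2:ℝ) < Real.log (π ^ 3 / 2) := by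
        have := Real.log_lt_log (Real.exp_pos 2) h32
        rwa [Real.log_exp] at this
      linarith
    linarith
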